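/- Let p be a prime, let G be a finite p-group of nilpotency class at most 2 with |Z(G)|² ≤ |G|, let r ≥ 1 and 0 ≤ s_1 ≤ ⋯ ≤ s_r be integers, and let w be the word in 2r variables w = [x_1,x_2]^{p^{s_1}} ⋯ [x_{2r−1},x_{2r}]^{p^{s_r}}. Then the generalized Amit bound holds for w: N_{w,G}(g) ≥ |G|^{2r−1} for every w-value g ∈ G_w. -/

import Mathlib

/-- The word `[x₁,x₂]^{p^{s₁}} ⋯ [x_{2r-1},x_{2r}]^{p^{s_r}}` (with `[x,y] = x⁻¹y⁻¹xy`)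
in `2r` variables. -/
def wCommPow (p r : ℕ) (s : Fin r → ℕ) : FreeGroup (Fin (2 * r)) :=
  (List.ofFn fun i : Fin r =>
    ((FreeGroup.of (⟨2 * i.val, by have := i.isLt; omega⟩ : Fin (2 * r)))⁻¹ *
     (FreeGroup.of (⟨2 * i.val + 1, by have := i.isLt; omega⟩ : Fin (2 * r)))⁻¹ *
     FreeGroup.of (⟨2 * i.val, by have := i.isLt; omega⟩ : Fin (2 * r)) *
     FreeGroup.of (⟨2 * i.val + 1, by have := i.isLt; omega⟩ : Fin (2 * r))) ^ (p ^ s i)).prod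

/-- `N_{w,G}(g)`: the number of tuples in `G` on which the word `w` evaluates to `g`. -/
noncomputable def wordFibreCard {k : ℕ} (G : Type*) [Group G] (w : FreeGroup (Fin k)) (g : G) : ℕ :=
  Nat.card {f : Fin k → G // FreeGroup.lift f w = g}

open scoped IsMulCommutative commutatorElement

section AmitAux

variable {G : Type*} [Group G]

private lemma comm_mem_center (hclass : commutator G ≤ Subgroup.center G) (x y : G) :
    x⁻¹ * y⁻¹ * x * y ∈ Subgroup.center G := by
  apply hclass
  have h1 : x⁻¹ * y⁻¹ * x * y = ⁅x⁻¹, y⁻¹⁆ := by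
    rw [commutatorElement_def]; group
  rw [h1, _root_.commutator_def]
  exact Subgroup.commutator_mem_commutator (Subgroup.mem_top _) (Subgroup.mem_top _)

/-- The commutator `x⁻¹y⁻¹xy` packaged as an element of the centre. -/
private def czm (hclass : commutator G ≤ Subgroup.center G) (x y : G) : Subgroup.center G :=
  ⟨x⁻¹ * y⁻¹ * x * y, comm_mem_center hclass x y⟩

private lemma czm_one_left (hclass : commutator G ≤ Subgroup.center G) (y : G) :
    czm hclass 1 y = 1 := by
  apply Subtype.ext
  show (1 : G)⁻¹ * y⁻¹ * 1 * y = 1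
  group

private lemma czm_one_right (hclass : commutator G ≤ Subgroup.center G) (x : G) :
    czm hclass x 1 = 1 := by
  apply Subtype.ext
  show x⁻¹ * (1 : G)⁻¹ * x * 1 = 1
  group

private lemma czm_mul_left (hclass : commutator G ≤ Subgroup.center G) (x x' y : G) :
    czm hclass (x * x') y = czm hclass x y * czm hclass x' y := by
  apply Subtype.ext
  have hc := Subgroup.mem_center_iff.mp (comm_mem_center hclass x y)
  show (x * x')⁻¹ * y⁻¹ * (x * x') * y = (x⁻¹ * y⁻¹ * x * y) * (x'⁻¹ * y⁻¹ * x' * y)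
  calc (x * x')⁻¹ * y⁻¹ * (x * x') * y
      = x'⁻¹ * (x⁻¹ * y⁻¹ * x * y) * (y⁻¹ * x' * y) := by group
    _ = (x⁻¹ * y⁻¹ * x * y) * x'⁻¹ * (y⁻¹ * x' * y) := by rw [hc x'⁻¹]
    _ = (x⁻¹ * y⁻¹ * x * y) * (x'⁻¹ * y⁻¹ * x' * y) := by group

private lemma czm_mul_right (hclass : commutator G ≤ Subgroup.center G) (x y y' : G) :
    czm hclass x (y * y') = czm hclass x y * czm hclass x y' := by
  apply Subtype.ext
  have hc := Subgroup.mem_center_iff.mp (comm_mem_center hclass x y)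
  show x⁻¹ * (y * y')⁻¹ * x * (y * y') = (x⁻¹ * y⁻¹ * x * y) * (x⁻¹ * y'⁻¹ * x * y')
  calc x⁻¹ * (y * y')⁻¹ * x * (y * y')
      = x⁻¹ * y'⁻¹ * x * ((x⁻¹ * y⁻¹ * x * y) * y') := by group
    _ = x⁻¹ * y'⁻¹ * x * (y' * (x⁻¹ * y⁻¹ * x * y)) := by rw [← hc y']
    _ = (x⁻¹ * y'⁻¹ * x * y') * (x⁻¹ * y⁻¹ * x * y) := by group
    _ = (x⁻¹ * y⁻¹ * x * y) * (x⁻¹ * y'⁻¹ * x * y') := by rw [hc (x⁻¹ * y'⁻¹ * x * y')]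

/-- `t ↦ ∏ i [t i, c i]^(q i)` as a homomorphism into the centre. -/
private def Tmap (hclass : commutator G ≤ Subgroup.center G) {r : ℕ} (q : Fin r → ℕ)
    (c : Fin r → G) : (Fin r → G) →* Subgroup.center G where
  toFun t := ∏ i, (czm hclass (t i) (c i)) ^ (q i)
  map_one' := by simp [czm_one_left hclass]
  map_mul' t t' := by
    simp only [Pi.mul_apply]
    rw [← Finset.prod_mul_distrib]
    exact Finset.prod_congr rfl fun i _ => by rw [czm_mul_left hclass, mul_pow]

/-- `k ↦ ∏ i [b i, k i]^(q i)` as a homomorphism into the centre. -/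
private def Kmap (hclass : commutator G ≤ Subgroup.center G) {r : ℕ} (q : Fin r → ℕ)
    (b : Fin r → G) : (Fin r → G) →* Subgroup.center G where
  toFun k := ∏ i, (czm hclass (b i) (k i)) ^ (q i)
  map_one' := by simp [czm_one_right hclass]
  map_mul' k k' := by
    simp only [Pi.mul_apply]
    rw [← Finset.prod_mul_distrib]
    exact Finset.prod_congr rfl fun i _ => by rw [czm_mul_right hclass, mul_pow]

private lemma card_le_ker_mul {H : Type*} {K : Type*} [Group H] [Group K] [Finite H] [Finite K]
    (φ : H →* K) : Nat.card H ≤ Nat.card φ.ker * Nat.card K := by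
  rw [Subgroup.card_eq_card_quotient_mul_card_subgroup φ.ker, Nat.mul_comm]
  apply Nat.mul_le_mul_left
  rw [Nat.card_congr (QuotientGroup.quotientKerEquivRange φ).toEquiv]
  exact Nat.card_le_card_of_injective _ Subtype.val_injective

/-- Interleave two `r`-tuples into a `2r`-tuple. -/
private def itl {r : ℕ} (u v : Fin r → G) : Fin (2 * r) → G := fun j =>
  if j.val % 2 = 0 then u ⟨j.val / 2, by have := j.isLt; omega⟩
  else v ⟨j.val / 2, by have := j.isLt; omega⟩

private lemma itl_even {r : ℕ} (u v : Fin r → G) (i : Fin r) :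
    itl u v ⟨2 * i.val, by have := i.isLt; omega⟩ = u i := by
  unfold itl
  rw [if_pos (show ((⟨2 * i.val, by have := i.isLt; omega⟩ : Fin (2 * r)) : Fin (2 * r)).val % 2 = 0
    by simp)]
  congr 1
  apply Fin.ext
  show 2 * i.val / 2 = i.val
  omega

private lemma itl_odd {r : ℕ} (u v : Fin r → G) (i : Fin r) :
    itl u v ⟨2 * i.val + 1, by have := i.isLt; omega⟩ = v i := by
  unfold itl
  rw [if_neg (show ¬((⟨2 * i.val + 1, by have := i.isLt; omega⟩ : Fin (2 * r)) :
      Fin (2 * r)).val % 2 = 0 by simp [Nat.add_mod])]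
  congr 1
  apply Fin.ext
  show (2 * i.val + 1) / 2 = i.val
  omega

private lemma lift_wCommPow (hclass : commutator G ≤ Subgroup.center G) (p r : ℕ)
    (s : Fin r → ℕ) (f : Fin (2 * r) → G) :
    FreeGroup.lift f (wCommPow p r s) =
      ((∏ i : Fin r, (czm hclass (f ⟨2 * i.val, by have := i.isLt; omega⟩)
          (f ⟨2 * i.val + 1, by have := i.isLt; omega⟩)) ^ (p ^ s i) :
        Subgroup.center G) : G) := by
  unfold wCommPow
  rw [map_list_prod, List.map_ofFn]
  have hfe : (⇑(FreeGroup.lift f) ∘ fun i : Fin r =>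
      ((FreeGroup.of (⟨2 * i.val, by have := i.isLt; omega⟩ : Fin (2 * r)))⁻¹ *
       (FreeGroup.of (⟨2 * i.val + 1, by have := i.isLt; omega⟩ : Fin (2 * r)))⁻¹ *
       FreeGroup.of (⟨2 * i.val, by have := i.isLt; omega⟩ : Fin (2 * r)) *
       FreeGroup.of (⟨2 * i.val + 1, by have := i.isLt; omega⟩ : Fin (2 * r))) ^ (p ^ s i)) =
      (⇑(Subgroup.center G).subtype ∘ fun i : Fin r =>
        (czm hclass (f ⟨2 * i.val, by have := i.isLt; omega⟩)
          (f ⟨2 * i.val + 1, by have := i.isLt; omega⟩)) ^ (p ^ s i)) := by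
    funext i
    simp only [Function.comp_apply, map_pow, map_mul, map_inv, FreeGroup.lift_apply_of]
    rfl
  rw [hfe, ← List.map_ofFn, ← map_list_prod, List.prod_ofFn]
  rfl

end AmitAux

/-- for a finite `p`-group `G` of nilpotency class at most 2 with
`|Z(G)|² ≤ |G|` and the word `w = [x₁,x₂]^{p^{s₁}} ⋯ [x_{2r-1},x_{2r}]^{p^{s_r}}` with
`0 ≤ s₁ ≤ ⋯ ≤ s_r`, the generalized Amit bound `N_{w,G}(g) ≥ |G|^{2r-1}` holds for every
`w`-value `g`. -/
theorem amit_bound_of_commutator_power_word (p : ℕ) (hp : p.Prime)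
    (G : Type*) [Group G] [Finite G] (hpG : IsPGroup p G)
    (hclass : commutator G ≤ Subgroup.center G)
    (hZ : Nat.card (Subgroup.center G) ^ 2 ≤ Nat.card G)
    (r : ℕ) (hr : 1 ≤ r) (s : Fin r → ℕ) (hs : Monotone s)
    (g : G)
    (hg : g ∈ Set.range fun f : Fin (2 * r) → G => FreeGroup.lift f (wCommPow p r s)) :
    Nat.card G ^ (2 * r - 1) ≤ wordFibreCard G (wCommPow p r s) g := by
  classical
  obtain ⟨f₀, hf₀'⟩ := hg
  have hf₀ : FreeGroup.lift f₀ (wCommPow p r s) = g := hf₀'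
  rw [lift_wCommPow hclass p r s] at hf₀
  set B : Fin r → G := fun i => f₀ ⟨2 * i.val, by have := i.isLt; omega⟩ with hB
  set C : Fin r → G := fun i => f₀ ⟨2 * i.val + 1, by have := i.isLt; omega⟩ with hC
  have hg' : ((∏ i : Fin r, (czm hclass (B i) (C i)) ^ (p ^ s i) :
      Subgroup.center G) : G) = g := hf₀
  set q : Fin r → ℕ := fun i => p ^ s i with hq
  let T : (Fin r → G) →* Subgroup.center G := Tmap hclass q C
  let K : (Fin r → G) → ((Fin r → G) →* Subgroup.center G) :=
    fun t => Kmap hclass q (fun i => B i * t i)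
  let S := {tk : (Fin r → G) × (Fin r → G) // T tk.1 = 1 ∧ K tk.1 tk.2 = 1}
  -- every element of `S` produces a solution
  have hmem : ∀ x : S,
      FreeGroup.lift (itl (fun i => B i * x.val.1 i) (fun i => C i * x.val.2 i))
        (wCommPow p r s) = g := by
    rintro ⟨⟨t, k⟩, ht, hk⟩
    rw [lift_wCommPow hclass p r s]
    have ht' : (∏ i : Fin r, (czm hclass (t i) (C i)) ^ (q i)) = 1 := ht
    have hk' : (∏ i : Fin r, (czm hclass (B i * t i) (k i)) ^ (q i)) = 1 := hk
    have h1 : (∏ i : Fin r,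
        (czm hclass
          ((itl (fun i => B i * t i) (fun i => C i * k i)) ⟨2 * i.val, by have := i.isLt; omega⟩)
          ((itl (fun i => B i * t i) (fun i => C i * k i))
            ⟨2 * i.val + 1, by have := i.isLt; omega⟩)) ^ (p ^ s i)) =
        ∏ i : Fin r, ((czm hclass (B i) (C i)) ^ (q i) * (czm hclass (t i) (C i)) ^ (q i) *
          (czm hclass (B i * t i) (k i)) ^ (q i)) := by
      refine Finset.prod_congr rfl fun i _ => ?_
      rw [itl_even, itl_odd, czm_mul_right hclass, czm_mul_left hclass, mul_pow, mul_pow]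
    rw [h1, Finset.prod_mul_distrib, Finset.prod_mul_distrib, ht', hk', mul_one, mul_one]
    exact hg'
  -- the injection from `S` into the fibre
  let jmap : S → {f : Fin (2 * r) → G // FreeGroup.lift f (wCommPow p r s) = g} :=
    fun x => ⟨itl (fun i => B i * x.val.1 i) (fun i => C i * x.val.2 i), hmem x⟩
  have hinj : Function.Injective jmap := by
    rintro ⟨⟨t, k⟩, h1⟩ ⟨⟨t', k'⟩, h2⟩ heq
    have heq' := congrArg Subtype.val heq
    simp only [jmap] at heq'
    have ht : t = t' := by
      funext i
      have h3 := congrFun heq' ⟨2 * i.val, by have := i.isLt; omega⟩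
      rw [itl_even, itl_even] at h3
      exact mul_left_cancel h3
    have hk : k = k' := by
      funext i
      have h3 := congrFun heq' ⟨2 * i.val + 1, by have := i.isLt; omega⟩
      rw [itl_odd, itl_odd] at h3
      exact mul_left_cancel h3
    apply Subtype.ext
    simp [ht, hk]
  have hfibcard : Nat.card S ≤ wordFibreCard G (wCommPow p r s) g := by
    unfold wordFibreCard
    exact Nat.card_le_card_of_injective jmap hinj
  -- compute the cardinality of S as a sum over the kernel of T
  letI : Fintype ↥T.ker := Fintype.ofFinite _
  have hcardS : Nat.card S = ∑ t : ↥T.ker, Nat.card ↥((K t.val).ker) := by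
    have e : S ≃ Σ t : ↥T.ker, ↥((K t.val).ker) :=
      { toFun := fun x => ⟨⟨x.val.1, MonoidHom.mem_ker.mpr x.prop.1⟩,
          ⟨x.val.2, MonoidHom.mem_ker.mpr x.prop.2⟩⟩
        invFun := fun y => ⟨(y.1.val, y.2.val),
          MonoidHom.mem_ker.mp y.1.prop, MonoidHom.mem_ker.mp y.2.prop⟩
        left_inv := fun _ => rfl
        right_inv := fun _ => rfl }
    rw [Nat.card_congr e]
    letI : ∀ t : ↥T.ker, Fintype ↥((K t.val).ker) := fun t => Fintype.ofFinite _
    rw [Nat.card_eq_fintype_card, Fintype.card_sigma]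
    exact Finset.sum_congr rfl fun t _ => (Nat.card_eq_fintype_card).symm
  set n := Nat.card G with hn
  set z := Nat.card (Subgroup.center G) with hz
  have hzpos : 0 < z := Nat.card_pos
  have hcardPi : Nat.card (Fin r → G) = n ^ r := by
    rw [Nat.card_fun]
    congr 1
    exact (Nat.card_eq_fintype_card).trans (Fintype.card_fin r)
  have hKerT : n ^ r ≤ Nat.card ↥T.ker * z := by
    have h := card_le_ker_mul T
    rwa [hcardPi] at h
  have hKerK : ∀ t : ↥T.ker, n ^ r ≤ Nat.card ↥((K t.val).ker) * z := by
    intro t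
    have h := card_le_ker_mul (K t.val)
    rwa [hcardPi] at h
  have hsum : Nat.card ↥T.ker * n ^ r ≤ Nat.card S * z := by
    rw [hcardS, Finset.sum_mul]
    calc Nat.card ↥T.ker * n ^ r = ∑ _t : ↥T.ker, n ^ r := by
          rw [Finset.sum_const, Finset.card_univ, smul_eq_mul, Nat.card_eq_fintype_card]
      _ ≤ ∑ t : ↥T.ker, Nat.card ↥((K t.val).ker) * z :=
          Finset.sum_le_sum fun t _ => hKerK t
  have main : n ^ (2 * r) ≤ Nat.card S * z * z := by
    calc n ^ (2 * r) = n ^ r * n ^ r := by rw [← pow_add]; congr 1; omega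
      _ ≤ (Nat.card ↥T.ker * z) * n ^ r := Nat.mul_le_mul_right _ hKerT
      _ = (Nat.card ↥T.ker * n ^ r) * z := by ring
      _ ≤ (Nat.card S * z) * z := Nat.mul_le_mul_right _ hsum
  have hfin : n ^ (2 * r - 1) * (z * z) ≤ Nat.card S * (z * z) := by
    calc n ^ (2 * r - 1) * (z * z) ≤ n ^ (2 * r - 1) * n := by
          apply Nat.mul_le_mul_left
          calc z * z = z ^ 2 := (sq z).symm
            _ ≤ n := hZ
      _ = n ^ (2 * r) := by rw [← pow_succ]; congr 1; omega
      _ ≤ Nat.card S * z * z := main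
      _ = Nat.card S * (z * z) := by ring
  have hfinal : n ^ (2 * r - 1) ≤ Nat.card S :=
    Nat.le_of_mul_le_mul_right hfin (by positivity)
  exact hfinal.trans hfibcard
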